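/- Let M ≥ 2 be an integer, h = 1/M, x_i = i·h, D_i = x_i(1 − x_i), τ > 0. Suppose f = (f_0,…,f_M) and f' = (f'_0,…,f'_M) satisfy the Scheme 3 update: with j_{i+1/2} = −(D_{i+1} f'_{i+1} − D_i f'_i)/h, one has f'_i = f_i − (τ/h)(j_{i+1/2} − j_{i−1/2}) for i = 1,…,M−1, f'_0 = f_0 − (2τ/h)·j_{1/2}, and f'_M = f_M + (2τ/h)·j_{M−1/2}. Then the discrete expectation is conserved: (h/2)x_0 f'_0 + (h/2)x_M f'_M + Σ_{i=1}^{M−1} x_i f'_i h = (h/2)x_0 f_0 + (h/2)x_M f_M + Σ_{i=1}^{M−1} x_i f_i h. -/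

import Mathlib

open Finset

/-- The implicit Scheme 3 update conserves the discrete expectation
`E(g) = (h/2)x₀g₀ + (h/2)x_M g_M + Σ_{i=1}^{M−1} x_i g_i h`. -/
theorem scheme3_conserves_expectation
    (M : ℕ) (hM : 2 ≤ M) (h τ : ℝ) (hh : h = 1 / (M : ℝ)) (hτ : 0 < τ)
    (f f' j : ℕ → ℝ)
    (hj : ∀ i, j i = -((((i : ℝ) + 1) * h * (1 - ((i : ℝ) + 1) * h)) * f' (i + 1)
        - ((i : ℝ) * h * (1 - (i : ℝ) * h)) * f' i) / h)
    (hint : ∀ i, 1 ≤ i → i ≤ M - 1 → f' i = f i - (τ / h) * (j i - j (i - 1)))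
    (hb0 : f' 0 = f 0 - (2 * τ / h) * j 0)
    (hbM : f' M = f M + (2 * τ / h) * j (M - 1)) :
    h / 2 * ((0 : ℝ) * h) * f' 0 + h / 2 * ((M : ℝ) * h) * f' M
        + ∑ i ∈ Finset.Ico 1 M, ((i : ℝ) * h) * f' i * h =
      h / 2 * ((0 : ℝ) * h) * f 0 + h / 2 * ((M : ℝ) * h) * f M
        + ∑ i ∈ Finset.Ico 1 M, ((i : ℝ) * h) * f i * h := by
  have hM1 : 1 ≤ M := le_trans (by norm_num) hM
  have hMpos : (0:ℝ) < (M:ℝ) := by exact_mod_cast (by omega : 0 < M)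
  have hh0 : h ≠ 0 := by rw [hh]; positivity
  have hMh : (M:ℝ) * h = 1 := by rw [hh]; field_simp
  set D : ℕ → ℝ := fun i => (i:ℝ) * h * (1 - (i:ℝ) * h) with hD
  -- telescoping: total flux sums to zero
  have hjD : ∀ i, j i = (D i * f' i - D (i+1) * f' (i+1)) / h := by
    intro i
    rw [hj i]
    simp only [hD]
    push_cast
    ring
  have htel : ∑ i ∈ Finset.range M, j i = 0 := by
    rw [Finset.sum_congr rfl (fun i _ => hjD i), ← Finset.sum_div,
      Finset.sum_range_sub' (fun i => D i * f' i)]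
    have h0 : D 0 = 0 := by simp [hD]
    have hDM : D M = 0 := by simp [hD, hMh]
    rw [h0, hDM]
    simp
  have hsum : ∑ k ∈ Finset.range (M-1), j k = - j (M-1) := by
    have hs := Finset.sum_range_succ j (M-1)
    rw [Nat.sub_add_cancel hM1] at hs
    rw [htel] at hs
    linarith
  -- Abel summation
  have habel : ∑ i ∈ Finset.Ico 1 M, (i:ℝ) * (j i - j (i-1))
      = ((M:ℝ) - 1) * j (M-1) - ∑ k ∈ Finset.range (M-1), j k := by
    rw [Finset.sum_Ico_eq_sum_range]
    have hcong : ∀ k ∈ Finset.range (M-1),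
        ((1 + k : ℕ):ℝ) * (j (1+k) - j (1+k-1))
        = ((((k+1:ℕ)):ℝ) * j (k+1) - ((k:ℕ):ℝ) * j k) - j k := by
      intro k _
      have hk : 1 + k - 1 = k := by omega
      have hk2 : 1 + k = k + 1 := by omega
      rw [hk, hk2]
      push_cast
      ring
    rw [Finset.sum_congr rfl hcong, Finset.sum_sub_distrib,
      Finset.sum_range_sub (fun k => ((k:ℕ):ℝ) * j k)]
    have : (((M-1:ℕ)):ℝ) = (M:ℝ) - 1 := by
      push_cast [Nat.cast_sub hM1]; ring
    rw [this]
    push_cast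
    ring
  -- interior update rewritten
  have key : ∀ i ∈ Finset.Ico 1 M,
      ((i:ℝ) * h) * f' i * h = ((i:ℝ) * h) * f i * h - τ * h * ((i:ℝ) * (j i - j (i-1))) := by
    intro i hi
    rw [Finset.mem_Ico] at hi
    rw [hint i hi.1 (by omega)]
    field_simp
  rw [Finset.sum_congr rfl key, Finset.sum_sub_distrib, ← Finset.mul_sum, habel, hsum, hbM]
  have hfin : h / 2 * ((M:ℝ) * h) * (f M + 2 * τ / h * j (M-1))
      - τ * h * (((M:ℝ) - 1) * j (M-1) - - j (M-1))
      = h / 2 * ((M:ℝ) * h) * f M := by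
    have : h / 2 * ((M:ℝ) * h) * (2 * τ / h * j (M-1)) = τ * ((M:ℝ) * h) * j (M-1) := by
      field_simp
    nlinarith [this, hMh]
  linarith [hfin]
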